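/- Let f be an L_f-Lipschitz function on [ℓ,u], and let f̂ be the piecewise linear approximation of f on the uniform grid with I ≥ 2 points and spacing Δt = (u−ℓ)/(I−1), i.e., the piecewise linear approximation built from the samples x[i] = f(t[i]). Then ∫_ℓ^u (f̂(t) − f(t))² dt ≤ (2/15)·(u − ℓ)·Δt²·L_f². -/

import Mathlib

open Finset

/-- Uniform grid with `I` points on `[l, u]` (0-indexed): `t[i] = l + i·(u−l)/(I−1)`. -/
noncomputable def unifGrid (l u : ℝ) (I : ℕ) (i : ℕ) : ℝ := l + i * (u - l) / ((I : ℝ) - 1)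

lemma integral_weight (a b : ℝ) :
    ∫ t in a..b, (t - a) ^ 2 * (b - t) ^ 2 = (b - a) ^ 5 / 30 := by
  have hd : ∀ t : ℝ, HasDerivAt
      (fun t => (b - a) ^ 2 * (t - a) ^ 3 / 3 - (b - a) * (t - a) ^ 4 / 2 + (t - a) ^ 5 / 5)
      ((t - a) ^ 2 * (b - t) ^ 2) t := by
    intro t
    have h1 : HasDerivAt (fun t : ℝ => t - a) 1 t := (hasDerivAt_id t).sub_const a
    have h3 := ((h1.pow 3).const_mul ((b - a) ^ 2)).div_const 3
    have h4 := ((h1.pow 4).const_mul (b - a)).div_const 2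
    have h5 := (h1.pow 5).div_const 5
    refine ((h3.sub h4).add h5).congr_deriv ?_
    push_cast
    ring
  rw [intervalIntegral.integral_eq_sub_of_hasDerivAt (fun t _ => hd t)
    (by apply Continuous.intervalIntegrable; continuity)]
  ring

set_option maxHeartbeats 1000000 in
/-- Piecewise linear approximation error for a Lipschitz function. -/
theorem piecewise_linear_approximation
    (l u : ℝ) (hlu : l < u) (I : ℕ) (hI : 2 ≤ I)
    (f : ℝ → ℝ) (Lf : ℝ)
    (hfLip : ∀ s ∈ Set.Icc l u, ∀ t ∈ Set.Icc l u, |f s - f t| ≤ Lf * |s - t|)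
    (fhat : ℝ → ℝ)
    (hfhat : ∀ i : ℕ, i + 1 < I → ∀ t ∈ Set.Icc (unifGrid l u I i) (unifGrid l u I (i + 1)),
      fhat t = f (unifGrid l u I i) +
        (f (unifGrid l u I (i + 1)) - f (unifGrid l u I i)) *
          (t - unifGrid l u I i) / ((u - l) / ((I : ℝ) - 1))) :
    (∫ t in l..u, (fhat t - f t) ^ 2) ≤
      (2 / 15) * (u - l) * ((u - l) / ((I : ℝ) - 1)) ^ 2 * Lf ^ 2 := by
  obtain ⟨Δ, hΔdef⟩ : ∃ Δ : ℝ, Δ = (u - l) / ((I : ℝ) - 1) := ⟨_, rfl⟩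
  obtain ⟨n, hndef⟩ : ∃ n : ℕ, n = I - 1 := ⟨_, rfl⟩
  have hn1 : 1 ≤ n := by omega
  have hIn : (I : ℝ) - 1 = (n : ℝ) := by
    have : I = n + 1 := by omega
    rw [this]; push_cast; ring
  have hnpos : (0 : ℝ) < (n : ℝ) := by exact_mod_cast hn1
  have hΔpos : 0 < Δ := by
    rw [hΔdef, hIn]
    exact div_pos (by linarith) hnpos
  set a : ℕ → ℝ := fun i => l + i * Δ with hadef
  have haun : ∀ i : ℕ, unifGrid l u I i = a i := by
    intro i; simp only [hadef, unifGrid, hΔdef]; ring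
  have ha : ∀ i : ℕ, a i = l + i * Δ := fun i => rfl
  have hstep : ∀ i : ℕ, a (i + 1) - a i = Δ := by
    intro i; rw [ha, ha]; push_cast; ring
  have ha0 : a 0 = l := by rw [ha]; push_cast; ring
  have han : a n = u := by
    rw [ha, hΔdef, hIn]
    field_simp
    ring
  clear_value a
  have hl_mem : l ∈ Set.Icc l u := ⟨le_refl l, hlu.le⟩
  have hu_mem : u ∈ Set.Icc l u := ⟨hlu.le, le_refl u⟩
  have hLf : 0 ≤ Lf := by
    have h := hfLip l hl_mem u hu_mem
    have h2 : |l - u| = u - l := by rw [abs_sub_comm]; exact abs_of_pos (by linarith)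
    rw [h2] at h
    nlinarith [abs_nonneg (f l - f u)]
  have hfc : ContinuousOn f (Set.Icc l u) := by
    have : LipschitzOnWith ⟨Lf, hLf⟩ f (Set.Icc l u) := by
      apply LipschitzOnWith.of_dist_le_mul
      intro x hx y hy
      rw [Real.dist_eq, Real.dist_eq]; exact hfLip x hx y hy
    exact this.continuousOn
  have hsub : ∀ i : ℕ, i < n → Set.Icc (a i) (a (i + 1)) ⊆ Set.Icc l u := by
    intro i hi t ht
    rw [ha, ha] at ht
    constructor
    · have : (0 : ℝ) ≤ i * Δ := by positivity
      linarith [ht.1]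
    · have h1 : ((i : ℝ) + 1) * Δ ≤ n * Δ := by
        apply mul_le_mul_of_nonneg_right _ hΔpos.le
        have : (i : ℝ) + 1 ≤ n := by exact_mod_cast hi
        linarith
      have h2 : l + (n : ℝ) * Δ = u := by rw [← ha n]; exact han
      push_cast at ht
      linarith [ht.2]
  have key : ∀ i : ℕ, i < n →
      IntervalIntegrable (fun t => (fhat t - f t) ^ 2) MeasureTheory.volume (a i) (a (i + 1)) ∧
      (∫ t in a i..a (i + 1), (fhat t - f t) ^ 2) ≤ (2 / 15) * Lf ^ 2 * Δ ^ 3 := by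
    intro i hi
    have hBA : a (i + 1) - a i = Δ := hstep i
    have hiI : i + 1 < I := by omega
    have hsubAB : Set.Icc (a i) (a (i + 1)) ⊆ Set.Icc l u := hsub i hi
    have hfhat0 : ∀ t ∈ Set.Icc (a i) (a (i + 1)),
        fhat t = f (a i) + (f (a (i + 1)) - f (a i)) * (t - a i) / Δ := by
      intro t ht
      have := hfhat i hiI t (by rwa [haun i, haun (i + 1)])
      rwa [haun i, haun (i + 1), ← hΔdef] at this
    set A := a i with hA
    set B := a (i + 1) with hB
    clear_value A B
    clear hadef haun ha hstep ha0 han hsub hfhat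
    have hAB : A ≤ B := by linarith
    have hAmem : A ∈ Set.Icc l u := hsubAB ⟨le_refl A, hAB⟩
    have hBmem : B ∈ Set.Icc l u := hsubAB ⟨hAB, le_refl B⟩
    set g : ℝ → ℝ := fun t => (f A + (f B - f A) * (t - A) / Δ - f t) ^ 2 with hg
    have heq : Set.EqOn (fun t => (fhat t - f t) ^ 2) g (Set.uIcc A B) := by
      intro t ht
      rw [Set.uIcc_of_le hAB] at ht
      simp only [hg]
      rw [hfhat0 t ht]
    have hgc : ContinuousOn g (Set.Icc A B) := by
      apply ContinuousOn.pow
      apply ContinuousOn.sub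
      · apply ContinuousOn.add continuousOn_const
        apply ContinuousOn.div_const
        exact ContinuousOn.mul continuousOn_const (by fun_prop)
      · exact hfc.mono hsubAB
    have hgint : IntervalIntegrable g MeasureTheory.volume A B :=
      hgc.intervalIntegrable_of_Icc hAB
    have hint : IntervalIntegrable (fun t => (fhat t - f t) ^ 2) MeasureTheory.volume A B := by
      apply hgint.congr
      intro x hx
      exact (heq (Set.uIoc_subset_uIcc hx)).symm
    refine ⟨hint, ?_⟩
    rw [intervalIntegral.integral_congr heq]
    have hbound : ∀ t ∈ Set.Icc A B,
        g t ≤ 4 * Lf ^ 2 / Δ ^ 2 * ((t - A) ^ 2 * (B - t) ^ 2) := by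
      intro t ht
      have hp : 0 ≤ B - t := by linarith [ht.2]
      have hq : 0 ≤ t - A := by linarith [ht.1]
      have htm : t ∈ Set.Icc l u := hsubAB ht
      have b1 : |f A - f t| ≤ Lf * (t - A) := by
        have := hfLip A hAmem t htm
        rwa [abs_sub_comm A t, abs_of_nonneg hq] at this
      have b2 : |f B - f t| ≤ Lf * (B - t) := by
        have := hfLip B hBmem t htm
        rwa [abs_of_nonneg hp] at this
      have b1' := abs_le.mp b1
      have b2' := abs_le.mp b2
      have hge : g t = (((f A - f t) * (B - t) + (f B - f t) * (t - A)) / Δ) ^ 2 := by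
        simp only [hg]
        congr 1
        rw [eq_div_iff hΔpos.ne']
        have hdc : (f B - f A) * (t - A) / Δ * Δ = (f B - f A) * (t - A) :=
          div_mul_cancel₀ _ hΔpos.ne'
        linear_combination hdc + (f t - f A) * hBA
      rw [hge, div_pow, div_le_iff₀ (by positivity), div_mul_eq_mul_div,
        div_mul_cancel₀ _ (by positivity : Δ ^ 2 ≠ 0)]
      have s1 : (f A - f t) ^ 2 ≤ (Lf * (t - A)) ^ 2 := sq_le_sq' b1'.1 b1'.2
      have s2 : (f B - f t) ^ 2 ≤ (Lf * (B - t)) ^ 2 := sq_le_sq' b2'.1 b2'.2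
      have s3 : (f A - f t) * (f B - f t) ≤ Lf * (t - A) * (Lf * (B - t)) := by
        refine le_trans (le_abs_self _) ?_
        rw [abs_mul]
        exact mul_le_mul b1 b2 (abs_nonneg _) (by positivity)
      nlinarith [mul_le_mul_of_nonneg_right s1 (sq_nonneg (B - t)),
        mul_le_mul_of_nonneg_right s2 (sq_nonneg (t - A)),
        mul_le_mul_of_nonneg_right s3 (mul_nonneg hp hq)]
    have hhint : IntervalIntegrable (fun t => 4 * Lf ^ 2 / Δ ^ 2 * ((t - A) ^ 2 * (B - t) ^ 2))
        MeasureTheory.volume A B := by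
      apply Continuous.intervalIntegrable
      fun_prop
    clear_value g
    calc (∫ t in A..B, g t)
        ≤ ∫ t in A..B, 4 * Lf ^ 2 / Δ ^ 2 * ((t - A) ^ 2 * (B - t) ^ 2) :=
          intervalIntegral.integral_mono_on hAB hgint hhint hbound
      _ = 4 * Lf ^ 2 / Δ ^ 2 * ((B - A) ^ 5 / 30) := by
          rw [intervalIntegral.integral_const_mul, integral_weight]
      _ = (2 / 15) * Lf ^ 2 * Δ ^ 3 := by
          rw [hBA]
          have hΔ2 : Δ ^ 2 ≠ 0 := by positivity
          rw [div_mul_eq_mul_div, div_eq_iff hΔ2]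
          ring
  have hsum := intervalIntegral.sum_integral_adjacent_intervals
      (f := fun t => (fhat t - f t) ^ 2) (μ := MeasureTheory.volume) (a := a) (n := n)
      (fun k hk => (key k hk).1)
  rw [ha0, han] at hsum
  rw [← hsum, ← hΔdef]
  calc (∑ k ∈ Finset.range n, ∫ t in a k..a (k + 1), (fhat t - f t) ^ 2)
      ≤ ∑ k ∈ Finset.range n, (2 / 15) * Lf ^ 2 * Δ ^ 3 :=
        Finset.sum_le_sum (fun k hk => (key k (Finset.mem_range.mp hk)).2)
    _ = n * ((2 / 15) * Lf ^ 2 * Δ ^ 3) := by rw [Finset.sum_const, Finset.card_range]; ring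
    _ = (2 / 15) * (u - l) * Δ ^ 2 * Lf ^ 2 := by
        have hnd : (n : ℝ) * Δ = u - l := by
          rw [hΔdef, hIn]; field_simp
        linear_combination (2 / 15) * Lf ^ 2 * Δ ^ 2 * hnd
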